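/- Let H be a verbally closed subgroup of a free product G = G₁ * ⋯ * Gₙ of nontrivial finite groups, with Kurosh decomposition H = F * (free product of conjugates g_{i,j} H_{i,j} g_{i,j}⁻¹ with 1 ≠ H_{i,j} ≤ Gᵢ), where F is free. Then F is trivial. -/

import Mathlib

open Monoid

/-- A subgroup `H` of `G` is *verbally closed* if every coefficient-free equation
`w(x₁,…,xₙ) = h` with `h ∈ H` that has a solution in `G` also has a solution in `H`. -/
def VerballyClosed {G : Type*} [Group G] (H : Subgroup G) : Prop :=
  ∀ (n : ℕ) (w : FreeGroup (Fin n)) (h : G), h ∈ H →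
    (∃ x : Fin n → G, FreeGroup.lift x w = h) →
    ∃ x : Fin n → G, (∀ i, x i ∈ H) ∧ FreeGroup.lift x w = h

/-- Every element of a coproduct is a product of a list of images of `of`. -/
lemma exists_list_prod_of {ι : Type*} {G : ι → Type*} [∀ i, Group (G i)]
    (z : CoprodI G) :
    ∃ L : List (CoprodI G), (∀ t ∈ L, ∃ i g, t = CoprodI.of (i := i) g) ∧ L.prod = z := by
  induction z using CoprodI.induction_on with
  | one => exact ⟨[], by simp, rfl⟩
  | of i m =>
    exact ⟨[CoprodI.of m], by rintro t ht; simp at ht; exact ⟨i, m, ht⟩, by simp⟩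
  | mul x y hx hy =>
    obtain ⟨Lx, hLx, hLxp⟩ := hx
    obtain ⟨Ly, hLy, hLyp⟩ := hy
    refine ⟨Lx ++ Ly, ?_, by simp [hLxp, hLyp]⟩
    intro t ht
    rcases List.mem_append.mp ht with h | h
    · exact hLx t h
    · exact hLy t h

/-- In the Kurosh decomposition `H = F * (∗ⱼ gⱼ Hⱼ gⱼ⁻¹)` of a verbally closed
subgroup `H` of a free product `G₁ * ⋯ * Gₙ` of nontrivial finite groups
(`F` free, each `Hⱼ` a nontrivial subgroup of some factor `Gᵢ`), the free part `F`
is trivial. -/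
theorem kurosh_free_part_trivial {ι : Type*} [Fintype ι]
    (G : ι → Type*) [∀ i, Group (G i)] [∀ i, Finite (G i)] [∀ i, Nontrivial (G i)]
    (H : Subgroup (CoprodI G)) (hvc : VerballyClosed H)
    (J : Type*) (B : Option J → Subgroup (CoprodI G))
    (X : Type*) (eF : B none ≃* FreeGroup X)
    (hconj : ∀ j : J, ∃ (i : ι) (K : Subgroup (G i)) (c : CoprodI G), K ≠ ⊥ ∧
      B (some j) = (K.map (CoprodI.of (M := G))).map (MulAut.conj c).toMonoidHom)
    (hinj : Function.Injective (CoprodI.lift (fun o => (B o).subtype)))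
    (hrange : (CoprodI.lift (fun o => (B o).subtype)).range = H) :
    B none = ⊥ := by
  classical
  by_contra hbot
  -- `X` is nonempty
  have hX : Nonempty X := by
    by_contra hx
    rw [not_nonempty_iff] at hx
    apply hbot
    have htriv : ∀ z : FreeGroup X, z = 1 := by
      intro z
      induction z using FreeGroup.induction_on with
      | C1 => rfl
      | of x => exact hx.elim x
      | inv_of x _ => exact hx.elim x
      | mul x y hx hy => rw [hx, hy, one_mul]
    rw [Subgroup.eq_bot_iff_forall]
    intro b hb
    have : (⟨b, hb⟩ : B none) = 1 := by
      have := htriv (eF ⟨b, hb⟩)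
      have h2 := congrArg eF.symm this
      rwa [eF.symm_apply_apply, map_one] at h2
    exact congrArg Subtype.val this
  obtain ⟨x₀⟩ := hX
  set n := ∏ i, Nat.card (G i) with hn
  have hn1 : 1 ≤ n := by
    apply Finset.one_le_prod'
    intro i _
    exact Nat.one_le_iff_ne_zero.mpr (Nat.card_ne_zero.mpr ⟨⟨1⟩, inferInstance⟩)
  have hpow : ∀ (i : ι) (g : G i), g ^ n = 1 := by
    intro i g
    have h1 : orderOf g ∣ Nat.card (G i) := orderOf_dvd_natCard g
    have h2 : Nat.card (G i) ∣ n := Finset.dvd_prod_of_mem _ (Finset.mem_univ i)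
    exact orderOf_dvd_iff_pow_eq_one.mp (h1.trans h2)
  set Φ : CoprodI (fun o => ↥(B o)) →* CoprodI G := CoprodI.lift (fun o => (B o).subtype)
    with hΦ
  set f₀ : B none := eF.symm (FreeGroup.of x₀) with hf₀
  set f : CoprodI G := (f₀ : CoprodI G) with hfdef
  have hΦf : Φ (CoprodI.of (i := (none : Option J)) f₀) = f := by
    simp [hΦ, hfdef]
  have hfH : f ∈ H := by
    rw [← hrange]
    exact ⟨CoprodI.of f₀, hΦf⟩
  -- write `f` as a product of torsion elements
  obtain ⟨L, hLmem, hLprod⟩ := exists_list_prod_of f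
  -- the word
  set w : FreeGroup (Fin L.length) :=
    (List.ofFn fun i : Fin L.length => FreeGroup.of i ^ (n + 1)).prod with hw
  have hliftw : ∀ x : Fin L.length → CoprodI G,
      FreeGroup.lift x w = (List.ofFn fun i : Fin L.length => x i ^ (n + 1)).prod := by
    intro x
    rw [hw, map_list_prod, List.map_ofFn]
    refine congrArg _ (congrArg List.ofFn (funext fun i => ?_))
    simp [Function.comp, map_pow]
  have hsolG : ∃ x : Fin L.length → CoprodI G, FreeGroup.lift x w = f := by
    refine ⟨fun i => L.get i, ?_⟩
    rw [hliftw]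
    have hterm : (List.ofFn fun i : Fin L.length => L.get i ^ (n + 1)) =
        List.ofFn L.get := by
      congr 1
      funext i
      obtain ⟨j, g, hg⟩ := hLmem (L.get i) (L.get_mem i)
      rw [hg, pow_succ, ← map_pow, hpow j g, map_one, one_mul]
    rw [hterm, List.ofFn_get]
    exact hLprod
  obtain ⟨y, hyH, hyw⟩ := hvc L.length w f hfH hsolG
  have hyw' : (List.ofFn fun i : Fin L.length => y i ^ (n + 1)).prod = f := by
    rw [← hyw, hliftw]
  -- lift solutions into the abstract coproduct
  have hk : ∀ i, ∃ k : CoprodI (fun o => ↥(B o)), Φ k = y i := by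
    intro i
    have := hyH i
    rw [← hrange] at this
    exact this
  choose k hkeq using hk
  have key : Φ ((List.ofFn fun i : Fin L.length => k i ^ (n + 1)).prod) =
      Φ (CoprodI.of (i := (none : Option J)) f₀) := by
    rw [map_list_prod, List.map_ofFn, hΦf, ← hyw']
    refine congrArg _ (congrArg List.ofFn (funext fun i => ?_))
    simp [Function.comp, map_pow, hkeq]
  have key2 : (List.ofFn fun i : Fin L.length => k i ^ (n + 1)).prod =
      CoprodI.of (i := (none : Option J)) f₀ := hinj key
  -- the exponent-sum homomorphism
  set χ : CoprodI (fun o => ↥(B o)) →* Multiplicative ℤ :=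
    CoprodI.lift (fun o => Option.casesOn o
      ((FreeGroup.lift fun _ => Multiplicative.ofAdd (1 : ℤ)).comp eF.toMonoidHom)
      (fun _ => 1)) with hχ
  have hχf : χ (CoprodI.of (i := (none : Option J)) f₀) = Multiplicative.ofAdd (1 : ℤ) := by
    rw [hχ, CoprodI.lift_of]
    simp [hf₀]
  have hmain := congrArg χ key2
  rw [map_list_prod, List.map_ofFn, hχf] at hmain
  have hmain2 : (∏ i : Fin L.length, χ (k i)) ^ (n + 1) = Multiplicative.ofAdd (1 : ℤ) := by
    rw [← hmain, ← Finset.prod_pow, ← List.prod_ofFn]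
    refine congrArg _ (congrArg List.ofFn (funext fun i => ?_))
    simp [Function.comp, map_pow]
  have hadd := congrArg Multiplicative.toAdd hmain2
  rw [toAdd_pow, toAdd_ofAdd, nsmul_eq_mul] at hadd
  have hdvd : (((n + 1 : ℕ)) : ℤ) ∣ 1 := ⟨Multiplicative.toAdd (∏ i, χ (k i)), hadd.symm⟩
  have := Int.le_of_dvd one_pos hdvd
  omega
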